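/- Let a, b satisfy 1 ≤ −1/a ≤ b+1 and a−1 ≤ −1/b ≤ −1. Define I(a,b) = ∫_a^{1−1/b} log|x|/(1−x) dx + ∫_{1−1/b}^{a+1} log|x|/(2−x) dx + ∫_{b−1}^{−1/a−1} log|x|/(x+2) dx + ∫_{−1/a−1}^{b} log|x|/(x+1) dx. Then I(a,b) = −π²/6, independently of a and b. -/

import Mathlib

open Set Real MeasureTheory intervalIntegral Filter Finset

-- integrability of log|x| on any interval
lemma intlog (a b : ℝ) : IntervalIntegrable (fun x => Real.log |x|) volume a b := by
  have key : ∀ c : ℝ, 0 ≤ c → IntervalIntegrable (fun x => Real.log |x|) volume 0 c := by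
    intro c hc
    have hbound : ∀ x ∈ Ioc (0:ℝ) c, ‖Real.log |x|‖ ≤ 2 * x ^ (-(1:ℝ)/2) + x := by
      intro x hx
      rw [abs_of_pos hx.1]
      rcases le_or_gt x 1 with h1 | h1
      · have hlx : Real.log x ≤ 0 := Real.log_nonpos hx.1.le h1
        rw [Real.norm_eq_abs, abs_of_nonpos hlx]
        have : -Real.log x = 2 * Real.log (x ^ (-(1:ℝ)/2) ) := by
          rw [Real.log_rpow hx.1]; ring
        rw [this]
        have h2 : Real.log (x ^ (-(1:ℝ)/2)) ≤ x ^ (-(1:ℝ)/2) - 1 :=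
          Real.log_le_sub_one_of_pos (Real.rpow_pos_of_pos hx.1 _)
        nlinarith [Real.rpow_pos_of_pos hx.1 (-(1:ℝ)/2), hx.1]
      · have hlx : 0 ≤ Real.log x := Real.log_nonneg h1.le
        rw [Real.norm_eq_abs, abs_of_nonneg hlx]
        have := Real.log_le_sub_one_of_pos (lt_trans one_pos h1)
        nlinarith [Real.rpow_pos_of_pos hx.1 (-(1:ℝ)/2)]
    have hint : IntervalIntegrable (fun x : ℝ => 2 * x ^ (-(1:ℝ)/2) + x) volume 0 c := by
      refine ((intervalIntegral.intervalIntegrable_rpow' (by norm_num)).const_mul 2).add ?_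
      exact intervalIntegrable_id
    refine IntervalIntegrable.mono_fun hint ?_ ?_
    · exact ((Real.measurable_log.comp measurable_norm).aestronglyMeasurable).restrict
    · rw [uIoc_of_le hc]
      refine (ae_restrict_iff' measurableSet_Ioc).2 (ae_of_all _ ?_)
      intro x hx
      exact (hbound x hx).trans (le_abs_self _)
  have key2 : ∀ c : ℝ, IntervalIntegrable (fun x => Real.log |x|) volume 0 c := by
    intro c
    rcases le_total 0 c with hc | hc
    · exact key c hc
    · have := (key (-c) (by linarith))
      rw [IntervalIntegrable.iff_comp_neg] at this
      simpa using this
  exact ((key2 a).symm.trans (key2 b))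


lemma II_congr {f g : ℝ → ℝ} {a b : ℝ} (hg : IntervalIntegrable g volume a b)
    (h : EqOn f g (uIcc a b)) : IntervalIntegrable f volume a b := by
  refine hg.congr_ae ?_
  refine (ae_restrict_iff' measurableSet_uIoc).2 (ae_of_all _ ?_)
  intro x hx
  exact (h (uIoc_subset_uIcc hx)).symm

lemma intlog_add (c a b : ℝ) : IntervalIntegrable (fun x => Real.log (c + x)) volume a b := by
  have h1 := (intlog (a + c) (b + c)).comp_add_right c
  simp only [add_sub_cancel_right] at h1
  refine II_congr h1 fun x _ => ?_
  simp [Real.log_abs, add_comm]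

lemma intlog_sub (c a b : ℝ) : IntervalIntegrable (fun x => Real.log (c - x)) volume a b := by
  have h1 := (intlog_add c (-b) (-a))
  rw [IntervalIntegrable.iff_comp_neg] at h1
  simp only [neg_neg] at h1
  refine II_congr h1.symm fun x _ => ?_
  simp [sub_eq_add_neg]

lemma intlog_mul_cont {a b : ℝ} {h : ℝ → ℝ} (hh : ContinuousOn h (uIcc a b)) :
    IntervalIntegrable (fun x => Real.log x * h x) volume a b := by
  have := (intlog a b).mul_continuousOn hh
  refine II_congr this fun x _ => ?_
  simp [Real.log_abs]

lemma intlog_add_mul_cont (c : ℝ) {a b : ℝ} {h : ℝ → ℝ} (hh : ContinuousOn h (uIcc a b)) :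
    IntervalIntegrable (fun x => Real.log (c + x) * h x) volume a b :=
  (intlog_add c a b).mul_continuousOn hh

lemma intlog_sub_mul_cont (c : ℝ) {a b : ℝ} {h : ℝ → ℝ} (hh : ContinuousOn h (uIcc a b)) :
    IntervalIntegrable (fun x => Real.log (c - x) * h x) volume a b :=
  (intlog_sub c a b).mul_continuousOn hh

lemma hlog1 (t : ℝ) (ht : t ≠ 0) : Real.log (1 - 1/t) = Real.log (1 - t) - Real.log t := by
  by_cases h1 : t = 1
  · simp [h1]
  · have h : 1 - 1/t = -((1 - t)/t) := by field_simp; ring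
    rw [h, ← Real.log_neg_eq_log, neg_neg, Real.log_div (sub_ne_zero.2 (Ne.symm h1)) ht]

lemma hlog2 (t : ℝ) (ht : t ≠ 0) : Real.log (-1/t - 1) = Real.log (1 + t) - Real.log t := by
  by_cases h1 : t = -1
  · norm_num [h1]
  · have hne : (1:ℝ) + t ≠ 0 := by
      intro h; apply h1; linarith
    have h : -1/t - 1 = -((1 + t)/t) := by field_simp; ring
    rw [h, ← Real.log_neg_eq_log, neg_neg, Real.log_div hne ht]


lemma subst_helper {f f' g : ℝ → ℝ} {a b A B : ℝ} (hab : a ≤ b) (hAB : A ≤ B)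
    (hfa : f a = A) (hfb : f b = B)
    (hf : ContinuousOn f (Icc a b))
    (hder : ∀ x ∈ Ioo a b, HasDerivAt f (f' x) x)
    (hmap : ∀ x ∈ Icc a b, f x ∈ Icc A B)
    (hmapo : ∀ x ∈ Ioo a b, f x ∈ Ioo A B)
    (hgc : ContinuousOn g (Ioo A B))
    (hgi : IntervalIntegrable g volume A B)
    (hpull : IntervalIntegrable (fun x => f' x * g (f x)) volume a b) :
    ∫ x in A..B, g x = ∫ x in a..b, f' x * g (f x) := by
  rw [← hfa, ← hfb]
  refine (intervalIntegral.integral_comp_smul_deriv''' ?_ ?_ ?_ ?_ ?_).symm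
  · rwa [uIcc_of_le hab]
  · intro x hx
    rw [min_eq_left hab, max_eq_right hab] at hx
    exact (hder x hx).hasDerivWithinAt
  · rw [min_eq_left hab, max_eq_right hab]
    refine hgc.mono ?_
    rw [image_subset_iff]
    intro x hx; exact hmapo x hx
  · rw [uIcc_of_le hab]
    refine ((intervalIntegrable_iff').mp hgi).mono_set ?_
    rw [image_subset_iff]
    intro x hx
    rw [uIcc_of_le hAB]
    exact hmap x hx
  · have := (intervalIntegrable_iff').mp hpull
    rw [uIcc_of_le hab] at this
    rw [uIcc_of_le hab]
    simpa [Function.comp, smul_eq_mul] using this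


lemma pow_mul_log_cont (m : ℕ) (hm : 1 ≤ m) :
    ContinuousOn (fun t : ℝ => t ^ m * Real.log t) (Icc 0 1) := by
  intro x hx
  rcases eq_or_lt_of_le hx.1 with h0 | h0
  · subst h0
    have h : Tendsto (fun t : ℝ => t ^ m * Real.log t) (nhdsWithin 0 (Ioi 0)) (nhds 0) := by
      have := tendsto_log_mul_rpow_nhdsGT_zero (r := (m:ℝ)) (by positivity)
      refine (this.congr' ?_)
      filter_upwards [self_mem_nhdsWithin] with t ht
      rw [Real.rpow_natCast]; ring
    have h2 : ContinuousWithinAt (fun t : ℝ => t ^ m * Real.log t) (Ici 0) 0 := by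
      rw [← continuousWithinAt_Ioi_iff_Ici]
      unfold ContinuousWithinAt
      simpa [Real.log_zero, hm] using h
    exact h2.mono (Icc_subset_Ici_self)
  · exact ((continuous_pow m).continuousAt.continuousWithinAt.mul
      ((Real.continuousAt_log h0.ne').continuousWithinAt))

lemma integral_pow_mul_log (n : ℕ) :
    ∫ t in (0:ℝ)..1, t ^ n * Real.log t = -(1 / ((n:ℝ) + 1) ^ 2) := by
  set m := n + 1
  have hm1 : (1:ℝ) ≤ m := by exact_mod_cast Nat.one_le_iff_ne_zero.mpr (Nat.succ_ne_zero n)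
  have hmR : ((m:ℕ):ℝ) = (n:ℝ) + 1 := by push_cast [m]; ring
  have hm0 : ((n:ℝ) + 1) ≠ 0 := by positivity
  set F : ℝ → ℝ := fun t => t ^ m / ((n:ℝ)+1) * Real.log t - t ^ m / ((n:ℝ)+1) ^ 2 with hF
  have hcont : ContinuousOn F (Icc 0 1) := by
    apply ContinuousOn.sub
    · have := (pow_mul_log_cont m (Nat.le_add_left 1 n)).div_const ((n:ℝ)+1)
      refine this.congr fun t ht => ?_
      ring
    · exact (continuous_pow m).continuousOn.div_const _
  have hderiv : ∀ t ∈ Ioo (0:ℝ) 1, HasDerivAt F (t ^ n * Real.log t) t := by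
    intro t ht
    have h1 : HasDerivAt (fun t : ℝ => t ^ m) ((m : ℝ) * t ^ n) t := by
      simpa [m] using hasDerivAt_pow m t
    have h2 : HasDerivAt Real.log t⁻¹ t := Real.hasDerivAt_log ht.1.ne'
    have := ((h1.div_const ((n:ℝ)+1)).mul h2).sub (h1.div_const (((n:ℝ)+1)^2))
    convert this using 1 <;> try rfl
    rw [hmR]
    have ht0 : t ≠ 0 := ht.1.ne'
    have hpm : t ^ m = t ^ n * t := by rw [pow_succ]
    field_simp [hpm]
    ring
  have hint : IntervalIntegrable (fun t : ℝ => t ^ n * Real.log t) volume 0 1 := by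
    have h := (intlog 0 1).continuousOn_mul (f := fun x => Real.log |x|)
      (g := fun t : ℝ => t ^ n) (continuous_pow n).continuousOn
    refine h.congr_ae ?_
    rw [uIoc_of_le (by norm_num : (0:ℝ) ≤ 1)]
    refine (ae_restrict_iff' measurableSet_Ioc).2 (ae_of_all _ ?_)
    intro t ht
    simp only [abs_of_pos ht.1]
  have := intervalIntegral.integral_eq_sub_of_hasDeriv_right_of_le (by norm_num : (0:ℝ) ≤ 1)
    hcont (fun t ht => (hderiv t ht).hasDerivWithinAt) hint
  rw [this, hF]
  simp [Real.log_zero, zero_pow (by omega : m ≠ 0)]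


lemma intlog_abs_mul_cont {a b : ℝ} {h : ℝ → ℝ} (hh : ContinuousOn h (uIcc a b)) :
    IntervalIntegrable (fun x => Real.log |x| * h x) volume a b :=
  (intlog a b).mul_continuousOn hh

-- partial sums of the alternating series
noncomputable def Salt (N : ℕ) : ℝ := ∑ n ∈ range N, (-1:ℝ) ^ n / ((n:ℝ) + 1) ^ 2
noncomputable def Tsum (N : ℕ) : ℝ := ∑ n ∈ range N, (1:ℝ) / ((n:ℝ) + 1) ^ 2

lemma Salt_even (N : ℕ) : Salt (2 * N) = Tsum (2 * N) - Tsum N / 2 := by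
  induction N with
  | zero => simp [Salt, Tsum]
  | succ k ih =>
    have e1 : 2 * (k + 1) = (2 * k) + 1 + 1 := by ring
    rw [e1]
    simp only [Salt, Tsum, Finset.sum_range_succ] at *
    rw [ih]
    push_cast
    have h1 : ((2:ℝ) * k + 1 + 1) ≠ 0 := by positivity
    have h2 : ((2:ℝ) * k + 1) ≠ 0 := by positivity
    have h3 : ((k:ℝ) + 1) ≠ 0 := by positivity
    have hpow : (-1:ℝ) ^ (2 * k) = 1 := by
      rw [pow_mul]; norm_num
    have hpow2 : (-1:ℝ) ^ (2 * k + 1) = -1 := by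
      rw [pow_succ, hpow]; norm_num
    rw [hpow, hpow2]
    field_simp
    ring

lemma tendsto_Tsum : Tendsto Tsum atTop (nhds (Real.pi ^ 2 / 6)) := by
  have h := hasSum_zeta_two
  have h2 := h.tendsto_sum_nat
  have key : ∀ N, Tsum N = ∑ n ∈ range (N + 1), (1:ℝ) / (n:ℝ) ^ 2 := by
    intro N
    rw [Finset.sum_range_succ' (fun n => (1:ℝ) / (n:ℝ) ^ 2) N]
    simp [Tsum]
  have : Tsum = fun N => ∑ n ∈ range (N + 1), (1:ℝ) / (n:ℝ) ^ 2 := funext key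
  rw [this]
  exact h2.comp (tendsto_add_atTop_nat 1)

lemma base_integral : ∫ t in (0:ℝ)..1, Real.log t / (1 + t) = -(Real.pi ^ 2) / 12 := by
  set I := ∫ t in (0:ℝ)..1, Real.log t / (1 + t) with hI
  have hIint : IntervalIntegrable (fun t : ℝ => Real.log t / (1 + t)) volume 0 1 := by
    have h := intlog_abs_mul_cont (a := 0) (b := 1) (h := fun t : ℝ => (1 + t)⁻¹) ?_
    · refine h.congr_ae ?_
      rw [uIoc_of_le (by norm_num : (0:ℝ) ≤ 1)]
      refine (ae_restrict_iff' measurableSet_Ioc).2 (ae_of_all _ ?_)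
      intro t ht
      simp only [abs_of_pos ht.1, div_eq_mul_inv]
    · refine ContinuousOn.inv₀ (by fun_prop) ?_
      intro t ht
      rw [uIcc_of_le (by norm_num : (0:ℝ) ≤ 1)] at ht
      nlinarith [ht.1]
  have hrint : ∀ N : ℕ, IntervalIntegrable
      (fun t : ℝ => (-t) ^ N * (Real.log t / (1 + t))) volume 0 1 := by
    intro N
    have h := intlog_abs_mul_cont (a := 0) (b := 1)
      (h := fun t : ℝ => (-t) ^ N * (1 + t)⁻¹) ?_
    · refine h.congr_ae ?_
      rw [uIoc_of_le (by norm_num : (0:ℝ) ≤ 1)]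
      refine (ae_restrict_iff' measurableSet_Ioc).2 (ae_of_all _ ?_)
      intro t ht
      simp only [abs_of_pos ht.1, div_eq_mul_inv]
      ring
    · refine ContinuousOn.mul (by fun_prop) (ContinuousOn.inv₀ (by fun_prop) ?_)
      intro t ht
      rw [uIcc_of_le (by norm_num : (0:ℝ) ≤ 1)] at ht
      nlinarith [ht.1]
  have hpint : ∀ n : ℕ, IntervalIntegrable (fun t : ℝ => t ^ n * Real.log t) volume 0 1 := by
    intro n
    have h := intlog_abs_mul_cont (a := 0) (b := 1) (h := fun t : ℝ => t ^ n) (by fun_prop)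
    refine h.congr_ae ?_
    rw [uIoc_of_le (by norm_num : (0:ℝ) ≤ 1)]
    refine (ae_restrict_iff' measurableSet_Ioc).2 (ae_of_all _ ?_)
    intro t ht
    simp only [abs_of_pos ht.1]
    ring
  have step1 : ∀ N : ℕ,
      I - (∫ t in (0:ℝ)..1, (-t) ^ N * (Real.log t / (1 + t))) = -Salt N := by
    intro N
    rw [hI, ← intervalIntegral.integral_sub hIint (hrint N)]
    have hcongr : EqOn
        (fun t : ℝ => Real.log t / (1 + t) - (-t) ^ N * (Real.log t / (1 + t)))
        (fun t : ℝ => ∑ n ∈ range N, (-1:ℝ) ^ n * (t ^ n * Real.log t)) (uIcc 0 1) := by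
      intro t ht
      rw [uIcc_of_le (by norm_num : (0:ℝ) ≤ 1)] at ht
      have h1t : (1:ℝ) + t ≠ 0 := by nlinarith [ht.1]
      have hne : (-t : ℝ) ≠ 1 := by nlinarith [ht.1]
      have hg := geom_sum_eq hne N
      simp only
      have : ∀ n ∈ range N, (-1:ℝ) ^ n * (t ^ n * Real.log t) = (-t) ^ n * Real.log t := by
        intro n _
        rw [neg_pow]
        ring
      have h2 : (-t:ℝ) - 1 ≠ 0 := by nlinarith [ht.1]
      rw [Finset.sum_congr rfl this, ← Finset.sum_mul, hg]
      field_simp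
      ring
    rw [intervalIntegral.integral_congr hcongr,
      intervalIntegral.integral_finset_sum (fun n _ => (hpint n).const_mul _)]
    have : ∀ n ∈ range N, (∫ t in (0:ℝ)..1, (-1:ℝ) ^ n * (t ^ n * Real.log t))
        = (-1:ℝ) ^ n * -(1 / ((n:ℝ) + 1) ^ 2) := by
      intro n _
      rw [intervalIntegral.integral_const_mul, integral_pow_mul_log n]
    rw [Finset.sum_congr rfl this]
    simp only [Salt, neg_eq_iff_eq_neg, ← Finset.sum_neg_distrib]
    refine Finset.sum_congr rfl fun n _ => ?_
    rw [div_eq_mul_inv]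
    ring
  have step2 : ∀ N : ℕ,
      |∫ t in (0:ℝ)..1, (-t) ^ N * (Real.log t / (1 + t))| ≤ 1 / ((N:ℝ) + 1) ^ 2 := by
    intro N
    have h1 := intervalIntegral.abs_integral_le_integral_abs
      (f := fun t : ℝ => (-t) ^ N * (Real.log t / (1 + t))) (a := 0) (b := 1) (μ := volume)
      (by norm_num)
    have h2 : (∫ t in (0:ℝ)..1, |(-t) ^ N * (Real.log t / (1 + t))|)
        ≤ ∫ t in (0:ℝ)..1, t ^ N * -Real.log t := by
      refine intervalIntegral.integral_mono_on (by norm_num) (hrint N).abs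
        ((hpint N).neg.congr_ae ?_) ?_
      · refine (ae_restrict_iff' measurableSet_uIoc).2 (ae_of_all _ ?_)
        intro t _
        simp [mul_neg]
      · intro t ht
        have ht0 : 0 ≤ t := ht.1
        have hlog : Real.log t ≤ 0 := Real.log_nonpos ht0 ht.2
        have h1t : (1:ℝ) ≤ 1 + t := by linarith
        rw [abs_mul, abs_pow, abs_neg, abs_of_nonneg ht0, abs_div,
          abs_of_nonpos hlog, abs_of_pos (by linarith : (0:ℝ) < 1 + t)]
        have hp : (0:ℝ) ≤ t ^ N := pow_nonneg ht0 N
        have : -Real.log t / (1 + t) ≤ -Real.log t := by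
          rw [div_le_iff₀ (by linarith : (0:ℝ) < 1 + t)]
          nlinarith
        nlinarith
    have h3 : (∫ t in (0:ℝ)..1, t ^ N * -Real.log t) = 1 / ((N:ℝ) + 1) ^ 2 := by
      have : (∫ t in (0:ℝ)..1, t ^ N * -Real.log t)
          = -∫ t in (0:ℝ)..1, t ^ N * Real.log t := by
        rw [← intervalIntegral.integral_neg]
        congr 1
        funext t
        ring
      rw [this, integral_pow_mul_log N]
      ring
    calc |∫ t in (0:ℝ)..1, (-t) ^ N * (Real.log t / (1 + t))|
        ≤ ∫ t in (0:ℝ)..1, |(-t) ^ N * (Real.log t / (1 + t))| := h1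
      _ ≤ ∫ t in (0:ℝ)..1, t ^ N * -Real.log t := h2
      _ = 1 / ((N:ℝ) + 1) ^ 2 := h3
  -- Salt N → -I
  have hSaltI : Tendsto Salt atTop (nhds (-I)) := by
    have hz : Tendsto (fun N : ℕ => (1:ℝ) / ((N:ℝ) + 1) ^ 2) atTop (nhds 0) := by
      have h := tendsto_one_div_add_atTop_nhds_zero_nat (𝕜 := ℝ)
      refine squeeze_zero (fun n => by positivity) (fun n => ?_) h
      have h0 : (0:ℝ) ≤ (n:ℝ) := Nat.cast_nonneg n
      have h1 : (1:ℝ) ≤ (n:ℝ) + 1 := by linarith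
      rw [div_le_div_iff₀ (by positivity) (by positivity)]
      nlinarith
    have hnorm : ∀ N, ‖Salt N - (-I)‖ ≤ (1:ℝ) / ((N:ℝ) + 1) ^ 2 := by
      intro N
      have h := step2 N
      have hR : Salt N - (-I) = ∫ t in (0:ℝ)..1, (-t) ^ N * (Real.log t / (1 + t)) := by
        have := step1 N
        linarith
      rw [Real.norm_eq_abs, hR]
      exact h
    have h0 := squeeze_zero_norm hnorm hz
    have := h0.add_const (-I)
    simpa using this
  have hdouble : Tendsto (fun N : ℕ => 2 * N) atTop atTop :=
    tendsto_atTop_mono (fun n => by simp; omega) tendsto_id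
  have heven : Tendsto (fun N => Salt (2 * N)) atTop (nhds (-I)) := hSaltI.comp hdouble
  have heven2 : Tendsto (fun N => Salt (2 * N)) atTop
      (nhds (Real.pi ^ 2 / 6 - (Real.pi ^ 2 / 6) / 2)) := by
    have h := (tendsto_Tsum.comp hdouble).sub (tendsto_Tsum.div_const 2)
    refine h.congr fun N => ?_
    exact (Salt_even N).symm
  have := tendsto_nhds_unique heven heven2
  rw [hI] at this ⊢
  linarith


-- derivative of 1 - 1/t
lemma hderiv1 {t : ℝ} (ht : t ≠ 0) : HasDerivAt (fun t : ℝ => 1 - 1/t) (1/t^2) t := by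
  have h := (hasDerivAt_inv ht).const_sub 1
  simp only [one_div]
  convert h using 1 <;> try rfl
  field_simp

lemma hderiv2 {t : ℝ} (ht : t ≠ 0) : HasDerivAt (fun t : ℝ => -1/t - 1) (1/t^2) t := by
  have h := ((hasDerivAt_inv ht).neg).sub_const 1
  have : (fun t : ℝ => -1/t - 1) = fun t : ℝ => -t⁻¹ - 1 := by
    funext t; rw [neg_div, one_div]
  rw [this]
  convert h using 1 <;> try rfl
  field_simp

lemma substA1 {b : ℝ} (hb0 : 0 < b) (hb1 : b ≤ 1) :
    ∫ x in (1 - 1/b)..0, Real.log x / (1 - x)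
      = ∫ t in b..1, (Real.log (1 - t) - Real.log t) * (1/t) := by
  have hAB : 1 - 1/b ≤ 0 := by
    have : (1:ℝ) ≤ 1/b := by rw [le_div_iff₀ hb0]; linarith
    linarith
  have key := subst_helper (f := fun t => 1 - 1/t) (f' := fun t => 1/t^2)
    (g := fun x => Real.log x / (1 - x)) (a := b) (b := 1) (A := 1 - 1/b) (B := 0)
    hb1 hAB rfl (by norm_num) ?_ ?_ ?_ ?_ ?_ ?_ ?_
  · rw [key]
    refine intervalIntegral.integral_congr fun t ht => ?_
    rw [uIcc_of_le hb1] at ht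
    have ht0 : 0 < t := lt_of_lt_of_le hb0 ht.1
    have h1 : 1 - (1 - 1/t) = 1/t := by ring
    simp only [h1, hlog1 t ht0.ne']
    field_simp
  · -- continuity of f on Icc b 1
    refine ContinuousOn.sub continuousOn_const (ContinuousOn.div continuousOn_const
      continuousOn_id ?_)
    intro t ht
    exact (lt_of_lt_of_le hb0 ht.1).ne'
  · intro t ht
    exact hderiv1 (lt_trans hb0 ht.1).ne'
  · intro t ht
    have ht0 : 0 < t := lt_of_lt_of_le hb0 ht.1
    constructor
    · have : 1/t ≤ 1/b := one_div_le_one_div_of_le hb0 ht.1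
      linarith
    · have : (1:ℝ) ≤ 1/t := by rw [le_div_iff₀ ht0]; linarith [ht.2]
      linarith
  · intro t ht
    have ht0 : 0 < t := lt_trans hb0 ht.1
    constructor
    · have : 1/t < 1/b := one_div_lt_one_div_of_lt hb0 ht.1
      linarith
    · have : (1:ℝ) < 1/t := by rw [lt_div_iff₀ ht0]; linarith [ht.2]
      linarith
  · -- continuity of g on Ioo (1-1/b) 0
    refine ContinuousOn.div ?_ (by fun_prop) ?_
    · refine Real.continuousOn_log.mono ?_
      intro x hx
      exact ne_of_lt hx.2
    · intro x hx
      have : x < 0 := hx.2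
      intro h
      rw [sub_eq_zero] at h
      linarith
  · -- integrability of g on (1-1/b)..0
    refine II_congr (intlog_mul_cont (h := fun x => (1-x)⁻¹) ?_) ?_
    · refine ContinuousOn.inv₀ (by fun_prop) ?_
      intro x hx
      rw [uIcc_of_le hAB] at hx
      intro h
      rw [sub_eq_zero] at h
      have := hx.2; linarith
    · intro x _
      simp only [div_eq_mul_inv]
  · -- integrability of pullback on b..1
    have hint : IntervalIntegrable
        (fun t => (Real.log (1 - t) - Real.log t) * (1/t)) volume b 1 := by
      have hc : ContinuousOn (fun t : ℝ => 1/t) (uIcc b 1) := by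
        refine ContinuousOn.div continuousOn_const continuousOn_id ?_
        intro t ht
        rw [uIcc_of_le hb1] at ht
        exact (lt_of_lt_of_le hb0 ht.1).ne'
      have h1 := intlog_sub_mul_cont 1 (a := b) (b := 1) hc
      have h2 := intlog_mul_cont (a := b) (b := 1) hc
      refine II_congr (h1.sub h2) fun t _ => ?_
      ring
    refine II_congr hint fun t ht => ?_
    rw [uIcc_of_le hb1] at ht
    have ht0 : 0 < t := lt_of_lt_of_le hb0 ht.1
    have h1 : 1 - (1 - 1/t) = 1/t := by ring
    simp only [h1, hlog1 t ht0.ne']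
    field_simp


lemma inv_bound {a : ℝ} (ha1 : -1 ≤ a) (ha0 : a < 0) : 1 ≤ -1/a := by
  have h : -1/a = 1/(-a) := by ring
  rw [h]
  have := one_div_le_one_div_of_le (by linarith : (0:ℝ) < -a) (by linarith : -a ≤ 1)
  simpa using this

lemma substA2 {b : ℝ} (hb0 : 0 < b) (hb1 : b ≤ 1) :
    ∫ x in (1 - 1/b)..0, Real.log x / (2 - x)
      = ∫ t in b..1, (Real.log (1 - t) - Real.log t) * (1/(t*(t+1))) := by
  have hAB : 1 - 1/b ≤ 0 := by
    have : (1:ℝ) ≤ 1/b := by rw [le_div_iff₀ hb0]; linarith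
    linarith
  have key := subst_helper (f := fun t => 1 - 1/t) (f' := fun t => 1/t^2)
    (g := fun x => Real.log x / (2 - x)) (a := b) (b := 1) (A := 1 - 1/b) (B := 0)
    hb1 hAB rfl (by norm_num) ?_ ?_ ?_ ?_ ?_ ?_ ?_
  · rw [key]
    refine intervalIntegral.integral_congr fun t ht => ?_
    rw [uIcc_of_le hb1] at ht
    have ht0 : 0 < t := lt_of_lt_of_le hb0 ht.1
    have ht1 : t + 1 ≠ 0 := by positivity
    have h1 : 2 - (1 - 1/t) = (t+1)/t := by field_simp; ring
    simp only [h1, hlog1 t ht0.ne']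
    rw [div_div_eq_mul_div]
    field_simp
  · refine ContinuousOn.sub continuousOn_const (ContinuousOn.div continuousOn_const
      continuousOn_id ?_)
    intro t ht
    exact (lt_of_lt_of_le hb0 ht.1).ne'
  · intro t ht
    exact hderiv1 (lt_trans hb0 ht.1).ne'
  · intro t ht
    have ht0 : 0 < t := lt_of_lt_of_le hb0 ht.1
    constructor
    · have : 1/t ≤ 1/b := one_div_le_one_div_of_le hb0 ht.1
      linarith
    · have : (1:ℝ) ≤ 1/t := by rw [le_div_iff₀ ht0]; linarith [ht.2]
      linarith
  · intro t ht
    have ht0 : 0 < t := lt_trans hb0 ht.1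
    constructor
    · have : 1/t < 1/b := one_div_lt_one_div_of_lt hb0 ht.1
      linarith
    · have : (1:ℝ) < 1/t := by rw [lt_div_iff₀ ht0]; linarith [ht.2]
      linarith
  · refine ContinuousOn.div ?_ (by fun_prop) ?_
    · refine Real.continuousOn_log.mono ?_
      intro x hx
      exact ne_of_lt hx.2
    · intro x hx
      have : x < 0 := hx.2
      intro h
      rw [sub_eq_zero] at h
      linarith
  · refine II_congr (intlog_mul_cont (h := fun x => (2-x)⁻¹) ?_) ?_
    · refine ContinuousOn.inv₀ (by fun_prop) ?_
      intro x hx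
      rw [uIcc_of_le hAB] at hx
      intro h
      rw [sub_eq_zero] at h
      have := hx.2; linarith
    · intro x _
      simp only [div_eq_mul_inv]
  · have hint : IntervalIntegrable
        (fun t => (Real.log (1 - t) - Real.log t) * (1/(t*(t+1)))) volume b 1 := by
      have hc : ContinuousOn (fun t : ℝ => 1/(t*(t+1))) (uIcc b 1) := by
        refine ContinuousOn.div continuousOn_const (by fun_prop) ?_
        intro t ht
        rw [uIcc_of_le hb1] at ht
        have ht0 : 0 < t := lt_of_lt_of_le hb0 ht.1
        positivity
      have h1 := intlog_sub_mul_cont 1 (a := b) (b := 1) hc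
      have h2 := intlog_mul_cont (a := b) (b := 1) hc
      refine II_congr (h1.sub h2) fun t _ => ?_
      ring
    refine II_congr hint fun t ht => ?_
    rw [uIcc_of_le hb1] at ht
    have ht0 : 0 < t := lt_of_lt_of_le hb0 ht.1
    have ht1 : t + 1 ≠ 0 := by positivity
    have h1 : 2 - (1 - 1/t) = (t+1)/t := by field_simp; ring
    simp only [h1, hlog1 t ht0.ne']
    rw [div_div_eq_mul_div]
    field_simp

lemma substA5 {a : ℝ} (ha1 : -1 ≤ a) (ha0 : a < 0) :
    ∫ x in (0:ℝ)..(-1/a - 1), Real.log x / (x + 2)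
      = ∫ t in (-1:ℝ)..a, (Real.log (1 + t) - Real.log t) * (1/(t*(t-1))) := by
  have hB : 0 ≤ -1/a - 1 := by
    have := inv_bound ha1 ha0
    linarith
  have key := subst_helper (f := fun t => -1/t - 1) (f' := fun t => 1/t^2)
    (g := fun x => Real.log x / (x + 2)) (a := -1) (b := a) (A := 0) (B := -1/a - 1)
    ha1 hB (by norm_num) rfl ?_ ?_ ?_ ?_ ?_ ?_ ?_
  · rw [key]
    refine intervalIntegral.integral_congr fun t ht => ?_
    rw [uIcc_of_le ha1] at ht
    have ht0 : t < 0 := lt_of_le_of_lt ht.2 ha0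
    have ht1 : t - 1 ≠ 0 := by intro h; rw [sub_eq_zero] at h; linarith
    have htne : t ≠ 0 := ht0.ne
    have h1 : -1/t - 1 + 2 = (t-1)/t := by field_simp; ring
    simp only [h1, hlog2 t ht0.ne]
    rw [div_div_eq_mul_div]
    field_simp
  · refine ContinuousOn.sub (ContinuousOn.div continuousOn_const continuousOn_id ?_)
      continuousOn_const
    intro t ht
    exact (lt_of_le_of_lt ht.2 ha0).ne
  · intro t ht
    exact hderiv2 (lt_trans ht.2 ha0).ne
  · intro t ht
    have ht0 : t < 0 := lt_of_le_of_lt ht.2 ha0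
    constructor
    · have := inv_bound (by linarith [ht.1] : -1 ≤ t) ht0
      linarith
    · have h1 : -1/t = 1/(-t) := by ring
      have h2 : -1/a = 1/(-a) := by ring
      have := one_div_le_one_div_of_le (by linarith : (0:ℝ) < -a) (by linarith [ht.2] : -a ≤ -t)
      rw [← h1, ← h2] at this
      linarith
  · intro t ht
    have ht0 : t < 0 := lt_trans ht.2 ha0
    constructor
    · have hb : -1 < t := ht.1
      have h1 : -1/t = 1/(-t) := by ring
      have := one_div_lt_one_div_of_lt (by linarith : (0:ℝ) < -t) (by linarith : -t < 1)
      rw [← h1] at this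
      simp only [div_one] at this
      linarith
    · have h1 : -1/t = 1/(-t) := by ring
      have h2 : -1/a = 1/(-a) := by ring
      have := one_div_lt_one_div_of_lt (by linarith : (0:ℝ) < -a) (by linarith [ht.2] : -a < -t)
      rw [← h1, ← h2] at this
      linarith
  · refine ContinuousOn.div ?_ (by fun_prop) ?_
    · refine Real.continuousOn_log.mono ?_
      intro x hx
      exact (hx.1).ne'
    · intro x hx
      have : 0 < x := hx.1
      intro h
      linarith
  · refine II_congr (intlog_mul_cont (h := fun x => (x+2)⁻¹) ?_) ?_
    · refine ContinuousOn.inv₀ (by fun_prop) ?_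
      intro x hx
      rw [uIcc_of_le hB] at hx
      have := hx.1
      intro h
      linarith
    · intro x _
      simp only [div_eq_mul_inv]
  · have hint : IntervalIntegrable
        (fun t => (Real.log (1 + t) - Real.log t) * (1/(t*(t-1)))) volume (-1) a := by
      have hc : ContinuousOn (fun t : ℝ => 1/(t*(t-1))) (uIcc (-1) a) := by
        refine ContinuousOn.div continuousOn_const (by fun_prop) ?_
        intro t ht
        rw [uIcc_of_le ha1] at ht
        have ht0 : t < 0 := lt_of_le_of_lt ht.2 ha0
        have h1 : t - 1 ≠ 0 := by intro h; rw [sub_eq_zero] at h; linarith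
        exact mul_ne_zero ht0.ne h1
      have h1 := intlog_add_mul_cont 1 (a := -1) (b := a) hc
      have h2 := intlog_mul_cont (a := -1) (b := a) hc
      refine II_congr (h1.sub h2) fun t _ => ?_
      ring
    refine II_congr hint fun t ht => ?_
    rw [uIcc_of_le ha1] at ht
    have ht0 : t < 0 := lt_of_le_of_lt ht.2 ha0
    have ht1 : t - 1 ≠ 0 := by intro h; rw [sub_eq_zero] at h; linarith
    have htne : t ≠ 0 := ht0.ne
    have h1 : -1/t - 1 + 2 = (t-1)/t := by field_simp; ring
    simp only [h1, hlog2 t ht0.ne]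
    rw [div_div_eq_mul_div]
    field_simp

lemma substA6 {a : ℝ} (ha1 : -1 ≤ a) (ha0 : a < 0) :
    ∫ x in (0:ℝ)..(-1/a - 1), Real.log x / (x + 1)
      = ∫ t in (-1:ℝ)..a, (Real.log (1 + t) - Real.log t) * (-(1/t)) := by
  have hB : 0 ≤ -1/a - 1 := by
    have := inv_bound ha1 ha0
    linarith
  have key := subst_helper (f := fun t => -1/t - 1) (f' := fun t => 1/t^2)
    (g := fun x => Real.log x / (x + 1)) (a := -1) (b := a) (A := 0) (B := -1/a - 1)
    ha1 hB (by norm_num) rfl ?_ ?_ ?_ ?_ ?_ ?_ ?_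
  · rw [key]
    refine intervalIntegral.integral_congr fun t ht => ?_
    rw [uIcc_of_le ha1] at ht
    have ht0 : t < 0 := lt_of_le_of_lt ht.2 ha0
    have h1 : -1/t - 1 + 1 = -1/t := by ring
    have htne : t ≠ 0 := ht0.ne
    simp only [h1, hlog2 t ht0.ne]
    rw [div_div_eq_mul_div]
    field_simp
  · refine ContinuousOn.sub (ContinuousOn.div continuousOn_const continuousOn_id ?_)
      continuousOn_const
    intro t ht
    exact (lt_of_le_of_lt ht.2 ha0).ne
  · intro t ht
    exact hderiv2 (lt_trans ht.2 ha0).ne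
  · intro t ht
    have ht0 : t < 0 := lt_of_le_of_lt ht.2 ha0
    constructor
    · have := inv_bound (by linarith [ht.1] : -1 ≤ t) ht0
      linarith
    · have h1 : -1/t = 1/(-t) := by ring
      have h2 : -1/a = 1/(-a) := by ring
      have := one_div_le_one_div_of_le (by linarith : (0:ℝ) < -a) (by linarith [ht.2] : -a ≤ -t)
      rw [← h1, ← h2] at this
      linarith
  · intro t ht
    have ht0 : t < 0 := lt_trans ht.2 ha0
    constructor
    · have hb : -1 < t := ht.1
      have h1 : -1/t = 1/(-t) := by ring
      have := one_div_lt_one_div_of_lt (by linarith : (0:ℝ) < -t) (by linarith : -t < 1)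
      rw [← h1] at this
      simp only [div_one] at this
      linarith
    · have h1 : -1/t = 1/(-t) := by ring
      have h2 : -1/a = 1/(-a) := by ring
      have := one_div_lt_one_div_of_lt (by linarith : (0:ℝ) < -a) (by linarith [ht.2] : -a < -t)
      rw [← h1, ← h2] at this
      linarith
  · refine ContinuousOn.div ?_ (by fun_prop) ?_
    · refine Real.continuousOn_log.mono ?_
      intro x hx
      exact (hx.1).ne'
    · intro x hx
      have : 0 < x := hx.1
      intro h
      linarith
  · refine II_congr (intlog_mul_cont (h := fun x => (x+1)⁻¹) ?_) ?_
    · refine ContinuousOn.inv₀ (by fun_prop) ?_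
      intro x hx
      rw [uIcc_of_le hB] at hx
      have := hx.1
      intro h
      linarith
    · intro x _
      simp only [div_eq_mul_inv]
  · have hint : IntervalIntegrable
        (fun t => (Real.log (1 + t) - Real.log t) * (-(1/t))) volume (-1) a := by
      have hc : ContinuousOn (fun t : ℝ => -(1/t)) (uIcc (-1) a) := by
        refine ContinuousOn.neg (ContinuousOn.div continuousOn_const continuousOn_id ?_)
        intro t ht
        rw [uIcc_of_le ha1] at ht
        exact (lt_of_le_of_lt ht.2 ha0).ne
      have h1 := intlog_add_mul_cont 1 (a := -1) (b := a) hc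
      have h2 := intlog_mul_cont (a := -1) (b := a) hc
      refine II_congr (h1.sub h2) fun t _ => ?_
      ring
    refine II_congr hint fun t ht => ?_
    rw [uIcc_of_le ha1] at ht
    have ht0 : t < 0 := lt_of_le_of_lt ht.2 ha0
    have h1 : -1/t - 1 + 1 = -1/t := by ring
    have htne : t ≠ 0 := ht0.ne
    simp only [h1, hlog2 t ht0.ne]
    rw [div_div_eq_mul_div]
    field_simp


-- integrability of log x / (c - x) and log x / (x + c)
lemma int_div_sub (c : ℝ) {a b : ℝ} (h : ∀ x ∈ uIcc a b, c - x ≠ 0) :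
    IntervalIntegrable (fun x => Real.log x / (c - x)) volume a b := by
  refine II_congr (intlog_mul_cont (h := fun x => (c - x)⁻¹)
    (ContinuousOn.inv₀ (by fun_prop) h)) fun x _ => ?_
  simp only [div_eq_mul_inv]

lemma int_div_add (c : ℝ) {a b : ℝ} (h : ∀ x ∈ uIcc a b, x + c ≠ 0) :
    IntervalIntegrable (fun x => Real.log x / (x + c)) volume a b := by
  refine II_congr (intlog_mul_cont (h := fun x => (x + c)⁻¹)
    (ContinuousOn.inv₀ (by fun_prop) h)) fun x _ => ?_
  simp only [div_eq_mul_inv]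

set_option maxHeartbeats 2000000 in
theorem entropy_integral_constant (a b : ℝ)
    (h1 : 1 ≤ -1 / a) (h2 : -1 / a ≤ b + 1)
    (h3 : a - 1 ≤ -1 / b) (h4 : -1 / b ≤ -1) :
    (∫ x in a..(1 - 1 / b), Real.log |x| / (1 - x)) +
    (∫ x in (1 - 1 / b)..(a + 1), Real.log |x| / (2 - x)) +
    (∫ x in (b - 1)..(-1 / a - 1), Real.log |x| / (x + 2)) +
    (∫ x in (-1 / a - 1)..b, Real.log |x| / (x + 1)) =
      -(Real.pi ^ 2) / 6 := by
  -- basic parameter facts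
  have ha0 : a < 0 := by
    rcases lt_trichotomy a 0 with h | h | h
    · exact h
    · rw [h, div_zero] at h1; linarith
    · have : -1 / a < 0 := div_neg_of_neg_of_pos (by norm_num) h
      linarith
  have hb0 : 0 < b := by
    rcases lt_trichotomy b 0 with h | h | h
    · have : 0 < -1 / b := div_pos_of_neg_of_neg (by norm_num) h
      linarith
    · rw [h, div_zero] at h4; linarith
    · exact h
  have hane : a ≠ 0 := ha0.ne
  have hbne : b ≠ 0 := hb0.ne'
  have ea : a * (-1 / a) = -1 := by field_simp
  have eb : b * (-1 / b) = -1 := by field_simp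
  have ha1 : -1 ≤ a := by nlinarith
  have hb1 : b ≤ 1 := by nlinarith
  have hab1 : 1 - 1/b ≤ 0 := by
    have : (1:ℝ) ≤ 1/b := by rw [le_div_iff₀ hb0]; linarith
    linarith
  have heq1 : -1/b = -(1/b) := by ring
  have heq2 : -1/a = -(1/a) := by ring
  have hA1 : a ≤ 1 - 1/b := by
    rw [heq1] at h3; linarith
  have hB0 : 0 ≤ -1/a - 1 := by
    have := inv_bound ha1 ha0
    linarith
  have hBb : -1/a - 1 ≤ b := by linarith
  have hb1' : b - 1 ≤ 0 := by linarith
  -- replace log |x| by log x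
  simp only [Real.log_abs]
  -- integrability facts
  have ig1_a0 : IntervalIntegrable (fun x => Real.log x / (1 - x)) volume a 0 :=
    int_div_sub 1 (fun x hx => by
      rw [uIcc_of_le ha0.le] at hx; intro h; rw [sub_eq_zero] at h; nlinarith [hx.2])
  have ig1_a1 : IntervalIntegrable (fun x => Real.log x / (1 - x)) volume a (-1) :=
    int_div_sub 1 (fun x hx => by
      rw [Set.uIcc_comm, uIcc_of_le ha1] at hx; intro h; rw [sub_eq_zero] at h; nlinarith [hx.2, ha0])
  have ig1_10 : IntervalIntegrable (fun x => Real.log x / (1 - x)) volume (-1) 0 :=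
    int_div_sub 1 (fun x hx => by
      rw [uIcc_of_le (by norm_num : (-1:ℝ) ≤ 0)] at hx
      intro h; rw [sub_eq_zero] at h; nlinarith [hx.2])
  have ig1_b : IntervalIntegrable (fun x => Real.log x / (1 - x)) volume 0 (1 - 1/b) :=
    int_div_sub 1 (fun x hx => by
      rw [Set.uIcc_comm, uIcc_of_le hab1] at hx
      intro h; rw [sub_eq_zero] at h; nlinarith [hx.2])
  have ig2_b : IntervalIntegrable (fun x => Real.log x / (2 - x)) volume (1 - 1/b) 0 :=
    int_div_sub 2 (fun x hx => by
      rw [uIcc_of_le hab1] at hx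
      intro h; rw [sub_eq_zero] at h; nlinarith [hx.2])
  have ig2_a : IntervalIntegrable (fun x => Real.log x / (2 - x)) volume 0 (a + 1) :=
    int_div_sub 2 (fun x hx => by
      rw [uIcc_of_le (by linarith : (0:ℝ) ≤ a + 1)] at hx
      intro h; rw [sub_eq_zero] at h; nlinarith [hx.2])
  have ig3_b : IntervalIntegrable (fun x => Real.log x / (x + 2)) volume (b - 1) 0 :=
    int_div_add 2 (fun x hx => by
      rw [uIcc_of_le hb1'] at hx
      intro h; nlinarith [hx.1])
  have ig3_a : IntervalIntegrable (fun x => Real.log x / (x + 2)) volume 0 (-1/a - 1) :=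
    int_div_add 2 (fun x hx => by
      rw [uIcc_of_le hB0] at hx
      intro h; nlinarith [hx.1])
  have ig4_a : IntervalIntegrable (fun x => Real.log x / (x + 1)) volume (-1/a - 1) 0 :=
    int_div_add 1 (fun x hx => by
      rw [Set.uIcc_comm, uIcc_of_le hB0] at hx
      intro h; nlinarith [hx.1])
  have ig4_01 : IntervalIntegrable (fun x => Real.log x / (x + 1)) volume 0 1 :=
    int_div_add 1 (fun x hx => by
      rw [uIcc_of_le (by norm_num : (0:ℝ) ≤ 1)] at hx
      intro h; nlinarith [hx.1])
  have ig4_1b : IntervalIntegrable (fun x => Real.log x / (x + 1)) volume 1 b :=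
    int_div_add 1 (fun x hx => by
      rw [Set.uIcc_comm, uIcc_of_le hb1] at hx
      intro h; nlinarith [hx.1])
  have ig4_0b : IntervalIntegrable (fun x => Real.log x / (x + 1)) volume 0 b :=
    int_div_add 1 (fun x hx => by
      rw [uIcc_of_le hb0.le] at hx
      intro h; nlinarith [hx.1])
  -- splits
  have E1 : (∫ x in a..(1 - 1/b), Real.log x / (1 - x))
      = (∫ x in a..0, Real.log x / (1 - x)) + (∫ x in (0:ℝ)..(1 - 1/b), Real.log x / (1 - x)) :=
    (intervalIntegral.integral_add_adjacent_intervals ig1_a0 ig1_b).symm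
  have E1b : (∫ x in a..0, Real.log x / (1 - x))
      = (∫ x in a..(-1:ℝ), Real.log x / (1 - x)) + (∫ x in (-1:ℝ)..0, Real.log x / (1 - x)) :=
    (intervalIntegral.integral_add_adjacent_intervals ig1_a1 ig1_10).symm
  have E2 : (∫ x in (1 - 1/b)..(a+1), Real.log x / (2 - x))
      = (∫ x in (1 - 1/b)..0, Real.log x / (2 - x)) + (∫ x in (0:ℝ)..(a+1), Real.log x / (2 - x)) :=
    (intervalIntegral.integral_add_adjacent_intervals ig2_b ig2_a).symm
  have E3 : (∫ x in (b-1)..(-1/a - 1), Real.log x / (x + 2))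
      = (∫ x in (b-1)..0, Real.log x / (x + 2)) + (∫ x in (0:ℝ)..(-1/a - 1), Real.log x / (x + 2)) :=
    (intervalIntegral.integral_add_adjacent_intervals ig3_b ig3_a).symm
  have E4 : (∫ x in (-1/a - 1)..b, Real.log x / (x + 1))
      = (∫ x in (-1/a - 1)..0, Real.log x / (x + 1)) + (∫ x in (0:ℝ)..b, Real.log x / (x + 1)) :=
    (intervalIntegral.integral_add_adjacent_intervals ig4_a ig4_0b).symm
  have E4b : (∫ x in (0:ℝ)..b, Real.log x / (x + 1))
      = (∫ x in (0:ℝ)..1, Real.log x / (x + 1)) + (∫ x in (1:ℝ)..b, Real.log x / (x + 1)) :=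
    (intervalIntegral.integral_add_adjacent_intervals ig4_01 ig4_1b).symm
  -- orientation flips
  have F1 : (∫ x in a..(-1:ℝ), Real.log x / (1 - x))
      = -(∫ x in (-1:ℝ)..a, Real.log x / (1 - x)) := intervalIntegral.integral_symm _ _
  have F2 : (∫ x in (0:ℝ)..(1 - 1/b), Real.log x / (1 - x))
      = -(∫ x in (1 - 1/b)..0, Real.log x / (1 - x)) := intervalIntegral.integral_symm _ _
  have F3 : (∫ x in (-1/a - 1)..0, Real.log x / (x + 1))
      = -(∫ x in (0:ℝ)..(-1/a - 1), Real.log x / (x + 1)) := intervalIntegral.integral_symm _ _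
  have F4 : (∫ x in (1:ℝ)..b, Real.log x / (x + 1))
      = -(∫ x in b..1, Real.log x / (x + 1)) := intervalIntegral.integral_symm _ _
  -- substitutions
  have S1 := substA1 hb0 hb1
  have S2 := substA2 hb0 hb1
  have S5 := substA5 ha1 ha0
  have S6 := substA6 ha1 ha0
  -- translation for I3 piece : x = t - 1
  have T3 : (∫ x in (b-1)..0, Real.log x / (x + 2))
      = ∫ t in b..1, Real.log (1 - t) * (1/(t+1)) := by
    have h := intervalIntegral.integral_comp_sub_right
      (a := b) (b := 1) (fun x => Real.log x / (x + 2)) 1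
    norm_num at h
    rw [← h]
    refine intervalIntegral.integral_congr fun t ht => ?_
    have e1 : t - 1 + 2 = t + 1 := by ring
    have e2 : Real.log (t - 1) = Real.log (1 - t) := by
      rw [show t - 1 = -(1 - t) by ring, Real.log_neg_eq_log]
    simp only [e1, e2, div_eq_mul_inv, one_div, one_mul]
  -- translation for I2 piece : x = t + 1
  have T4 : (∫ x in (0:ℝ)..(a+1), Real.log x / (2 - x))
      = ∫ t in (-1:ℝ)..a, Real.log (1 + t) * (1/(1-t)) := by
    have h := intervalIntegral.integral_comp_add_right
      (a := -1) (b := a) (fun x => Real.log x / (2 - x)) 1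
    norm_num at h
    rw [← h]
    refine intervalIntegral.integral_congr fun t ht => ?_
    have e1 : 2 - (t + 1) = 1 - t := by ring
    have e2 : Real.log (t + 1) = Real.log (1 + t) := by rw [add_comm]
    simp only [e1, e2, div_eq_mul_inv, one_div, one_mul]
  -- rewrite P4 in explicit form
  have T5 : (∫ x in b..1, Real.log x / (x + 1))
      = ∫ t in b..1, Real.log t * (1/(t+1)) := by
    refine intervalIntegral.integral_congr fun t ht => ?_
    simp only [div_eq_mul_inv, one_div, one_mul]
  -- base reflection
  have TB : (∫ x in (-1:ℝ)..0, Real.log x / (1 - x))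
      = ∫ x in (0:ℝ)..1, Real.log x / (x + 1) := by
    have h := intervalIntegral.integral_comp_neg (a := 0) (b := 1)
      (fun x => Real.log x / (1 - x))
    norm_num at h
    rw [← h]
    refine intervalIntegral.integral_congr fun t ht => ?_
    rw [add_comm]
  have TBval : (∫ x in (0:ℝ)..1, Real.log x / (x + 1)) = -(Real.pi ^ 2) / 12 := by
    rw [← base_integral]
    refine intervalIntegral.integral_congr fun t ht => ?_
    rw [add_comm]
  -- integrability of explicit t-integrands on b..1
  have hcb : ∀ h : ℝ → ℝ, ContinuousOn h (uIcc b 1) →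
      IntervalIntegrable (fun t => (Real.log (1 - t) - Real.log t) * h t) volume b 1 := by
    intro h hc
    refine II_congr ((intlog_sub_mul_cont 1 hc).sub (intlog_mul_cont hc)) fun t _ => ?_
    ring
  have hct : ContinuousOn (fun t : ℝ => 1/t) (uIcc b 1) := by
    refine ContinuousOn.div continuousOn_const continuousOn_id fun t ht => ?_
    rw [uIcc_of_le hb1] at ht
    exact (lt_of_lt_of_le hb0 ht.1).ne'
  have hct2 : ContinuousOn (fun t : ℝ => 1/(t*(t+1))) (uIcc b 1) := by
    refine ContinuousOn.div continuousOn_const (by fun_prop) fun t ht => ?_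
    rw [uIcc_of_le hb1] at ht
    have h0 : 0 < t := lt_of_lt_of_le hb0 ht.1
    positivity
  have hct3 : ContinuousOn (fun t : ℝ => 1/(t+1)) (uIcc b 1) := by
    refine ContinuousOn.div continuousOn_const (by fun_prop) fun t ht => ?_
    rw [uIcc_of_le hb1] at ht
    have h0 : 0 < t := lt_of_lt_of_le hb0 ht.1
    positivity
  have cb1 : IntervalIntegrable (fun t => (Real.log (1 - t) - Real.log t) * (1/t)) volume b 1 :=
    hcb _ hct
  have cb2 : IntervalIntegrable
      (fun t => (Real.log (1 - t) - Real.log t) * (1/(t*(t+1)))) volume b 1 := hcb _ hct2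
  have cb3 : IntervalIntegrable (fun t => Real.log (1 - t) * (1/(t+1))) volume b 1 :=
    intlog_sub_mul_cont 1 hct3
  have cb4 : IntervalIntegrable (fun t => Real.log t * (1/(t+1))) volume b 1 :=
    intlog_mul_cont hct3
  -- cancellation on b..1
  have Rb : (∫ t in b..1, (Real.log (1 - t) - Real.log t) * (1/(t*(t+1))))
      + ((∫ t in b..1, Real.log (1 - t) * (1/(t+1)))
        - ((∫ t in b..1, (Real.log (1 - t) - Real.log t) * (1/t))
          + (∫ t in b..1, Real.log t * (1/(t+1))))) = 0 := by
    rw [← intervalIntegral.integral_add cb1 cb4, ← intervalIntegral.integral_sub cb3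
      (cb1.add cb4), ← intervalIntegral.integral_add cb2 (cb3.sub (cb1.add cb4))]
    have : EqOn (fun t => (Real.log (1 - t) - Real.log t) * (1/(t*(t+1)))
        + (Real.log (1 - t) * (1/(t+1))
          - ((Real.log (1 - t) - Real.log t) * (1/t) + Real.log t * (1/(t+1)))))
        (fun _ => (0:ℝ)) (uIcc b 1) := by
      intro t ht
      rw [uIcc_of_le hb1] at ht
      have h0 : 0 < t := lt_of_lt_of_le hb0 ht.1
      have h0' : t ≠ 0 := h0.ne'
      have h1' : t + 1 ≠ 0 := by positivity
      simp only
      field_simp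
      ring
    rw [intervalIntegral.integral_congr this]
    exact intervalIntegral.integral_zero
  -- integrability of explicit t-integrands on -1..a
  have hca : ∀ h : ℝ → ℝ, ContinuousOn h (uIcc (-1) a) →
      IntervalIntegrable (fun t => (Real.log (1 + t) - Real.log t) * h t) volume (-1) a := by
    intro h hc
    refine II_congr ((intlog_add_mul_cont 1 hc).sub (intlog_mul_cont hc)) fun t _ => ?_
    ring
  have hdt : ContinuousOn (fun t : ℝ => 1/(t*(t-1))) (uIcc (-1) a) := by
    refine ContinuousOn.div continuousOn_const (by fun_prop) fun t ht => ?_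
    rw [uIcc_of_le ha1] at ht
    have h0 : t < 0 := lt_of_le_of_lt ht.2 ha0
    have hm : t - 1 ≠ 0 := by intro hh; rw [sub_eq_zero] at hh; linarith
    exact mul_ne_zero h0.ne hm
  have hdt2 : ContinuousOn (fun t : ℝ => -(1/t)) (uIcc (-1) a) := by
    refine ContinuousOn.neg (ContinuousOn.div continuousOn_const continuousOn_id
      fun t ht => ?_)
    rw [uIcc_of_le ha1] at ht
    exact (lt_of_le_of_lt ht.2 ha0).ne
  have hdt3 : ContinuousOn (fun t : ℝ => 1/(1-t)) (uIcc (-1) a) := by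
    refine ContinuousOn.div continuousOn_const (by fun_prop) fun t ht => ?_
    rw [uIcc_of_le ha1] at ht
    have h0 : t < 0 := lt_of_le_of_lt ht.2 ha0
    intro hh; rw [sub_eq_zero] at hh; linarith
  have ca2 : IntervalIntegrable (fun t => Real.log (1 + t) * (1/(1-t))) volume (-1) a :=
    intlog_add_mul_cont 1 hdt3
  have ca3 : IntervalIntegrable
      (fun t => (Real.log (1 + t) - Real.log t) * (1/(t*(t-1)))) volume (-1) a := hca _ hdt
  have ca4 : IntervalIntegrable
      (fun t => (Real.log (1 + t) - Real.log t) * (-(1/t))) volume (-1) a := hca _ hdt2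
  have ca1 : IntervalIntegrable (fun x => Real.log x / (1 - x)) volume (-1) a := ig1_a1.symm
  -- cancellation on -1..a
  have Ra : (∫ t in (-1:ℝ)..a, Real.log (1 + t) * (1/(1-t)))
      + ((∫ t in (-1:ℝ)..a, (Real.log (1 + t) - Real.log t) * (1/(t*(t-1))))
        - ((∫ t in (-1:ℝ)..a, Real.log t / (1 - t))
          + (∫ t in (-1:ℝ)..a, (Real.log (1 + t) - Real.log t) * (-(1/t))))) = 0 := by
    rw [← intervalIntegral.integral_add ca1 ca4, ← intervalIntegral.integral_sub ca3
      (ca1.add ca4), ← intervalIntegral.integral_add ca2 (ca3.sub (ca1.add ca4))]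
    have : EqOn (fun t => Real.log (1 + t) * (1/(1-t))
        + ((Real.log (1 + t) - Real.log t) * (1/(t*(t-1)))
          - (Real.log t / (1 - t) + (Real.log (1 + t) - Real.log t) * (-(1/t)))))
        (fun _ => (0:ℝ)) (uIcc (-1) a) := by
      intro t ht
      rw [uIcc_of_le ha1] at ht
      have h0 : t < 0 := lt_of_le_of_lt ht.2 ha0
      have h0' : t ≠ 0 := h0.ne
      have h1' : t - 1 ≠ 0 := by intro hh; rw [sub_eq_zero] at hh; linarith
      have h2' : (1:ℝ) - t ≠ 0 := by intro hh; rw [sub_eq_zero] at hh; linarith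
      simp only
      field_simp
      ring
    rw [intervalIntegral.integral_congr this]
    exact intervalIntegral.integral_zero
  linarith [E1, E1b, E2, E3, E4, E4b, F1, F2, F3, F4, S1, S2, S5, S6, T3, T4, T5, TB,
    TBval, Rb, Ra]
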